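/- Let r ≥ 2 be an integer radix and D ≥ 1. Let f : ℝ → ℝ be Lipschitz continuous with constant 1 (nonexpansive) and have a fixed point x* = f(x*) with |x*| ≤ 1 − 2·r^{-D}. Let (x_k)_{k∈ℕ} be a sequence of iterates with x_{k+1} = f(x_k) for all k. If some iterate n satisfies |x_n − x*| ≤ r^{-D}/2, then there exists a choice of symmetric maximally redundant signed-digit radix-r representations of the iterates in which the first D digits are stable from iterate n onward: there exist digit sequences d^{(k)} : ℕ → ℤ for each k ≥ n with |d^{(k)}_i| ≤ r − 1 for all i, x_k = Σ_{i=0}^∞ d^{(k)}_i · r^{-(i+1)}, and d^{(k)}_i = d^{(n)}_i for all i < D and all k ≥ n. -/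

import Mathlib

noncomputable def dig (r : ℕ) (s : ℝ) : ℤ := max (-((r:ℤ)-1)) (min ((r:ℤ)-1) ⌊(r:ℝ) * s⌋)

lemma abs_dig_le (r : ℕ) (hr : 2 ≤ r) (s : ℝ) : |dig r s| ≤ (r:ℤ) - 1 := by
  have h1 : (1:ℤ) ≤ (r:ℤ) - 1 := by omega
  rw [abs_le]
  constructor
  · exact le_max_left _ _
  · exact max_le (by linarith) (min_le_left _ _)

lemma abs_rem_le (r : ℕ) (hr : 2 ≤ r) (s : ℝ) (hs : |s| ≤ 1) :
    |(r:ℝ) * s - dig r s| ≤ 1 := by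
  have hr1 : (2:ℝ) ≤ (r:ℝ) := by exact_mod_cast hr
  have hu : |(r:ℝ) * s| ≤ r := by
    rw [abs_mul, abs_of_nonneg (by linarith : (0:ℝ) ≤ (r:ℝ))]
    nlinarith [abs_nonneg s]
  rw [abs_le] at hu hs ⊢
  set u := (r:ℝ) * s with hudef
  have hf1 : (⌊u⌋ : ℝ) ≤ u := Int.floor_le u
  have hf2 : u < ⌊u⌋ + 1 := Int.lt_floor_add_one u
  unfold dig
  rcases le_or_gt ((r:ℤ)-1) ⌊u⌋ with h | h
  · rw [min_eq_left h, max_eq_right (by omega : -((r:ℤ)-1) ≤ (r:ℤ)-1)]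
    have : ((r:ℤ)-1 : ℝ) ≤ ⌊u⌋ := by exact_mod_cast Int.cast_le.mpr h
    push_cast at this ⊢
    constructor <;> linarith
  · rcases le_or_gt ⌊u⌋ (-((r:ℤ)-1)) with h2 | h2
    · rw [min_eq_right (le_of_lt h), max_eq_left h2]
      have : (⌊u⌋ : ℝ) ≤ -((r:ℝ)-1) := by exact_mod_cast Int.cast_le.mpr h2
      push_cast at this ⊢
      constructor <;> linarith
    · rw [min_eq_right (le_of_lt h), max_eq_right (le_of_lt h2)]
      constructor <;> linarith

noncomputable def trem (r : ℕ) (z : ℝ) : ℕ → ℝ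
  | 0 => z
  | k+1 => (r:ℝ) * trem r z k - dig r (trem r z k)

lemma abs_trem_le (r : ℕ) (hr : 2 ≤ r) (z : ℝ) (hz : |z| ≤ 1) :
    ∀ k, |trem r z k| ≤ 1 := by
  intro k
  induction k with
  | zero => exact hz
  | succ k ih => exact abs_rem_le r hr _ ih

lemma trem_sum (r : ℕ) (hr : 2 ≤ r) (z : ℝ) :
    ∀ k, z - ∑ i ∈ Finset.range k, (dig r (trem r z i) : ℝ) * (r:ℝ) ^ (-(i + 1 : ℤ))
      = trem r z k * (r:ℝ) ^ (-(k : ℤ)) := by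
  have hr0 : (r:ℝ) ≠ 0 := by positivity
  intro k
  induction k with
  | zero => simp [trem]
  | succ k ih =>
    rw [Finset.sum_range_succ]
    have h1 : (r:ℝ) ^ (-(k+1 : ℤ)) * (r:ℝ) = (r:ℝ) ^ (-(k:ℤ)) := by
      rw [← zpow_add_one₀ hr0]; ring_nf
    have : trem r z (k+1) * (r:ℝ) ^ (-((k:ℤ)+1)) =
        trem r z k * (r:ℝ) ^ (-(k:ℤ)) - (dig r (trem r z k) : ℝ) * (r:ℝ) ^ (-(k+1 : ℤ)) := by
      show ((r:ℝ) * trem r z k - dig r (trem r z k)) * (r:ℝ) ^ (-((k:ℤ)+1)) = _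
      linear_combination trem r z k * h1
    push_cast at this ⊢
    rw [this, ← ih]
    ring

lemma exists_rep (r : ℕ) (hr : 2 ≤ r) (z : ℝ) (hz : |z| ≤ 1) :
    ∃ e : ℕ → ℤ, (∀ i, |e i| ≤ (r:ℤ) - 1) ∧
      HasSum (fun i : ℕ => (e i : ℝ) * (r:ℝ) ^ (-(i + 1 : ℤ))) z := by
  have hr2 : (2:ℝ) ≤ (r:ℝ) := by exact_mod_cast hr
  have hr0 : (r:ℝ) ≠ 0 := by positivity
  refine ⟨fun i => dig r (trem r z i), fun i => abs_dig_le r hr _, ?_⟩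
  set g : ℕ → ℝ := fun i => (dig r (trem r z i) : ℝ) * (r:ℝ) ^ (-(i + 1 : ℤ)) with hg
  have hbound : ∀ i, ‖g i‖ ≤ ((r:ℝ)⁻¹) ^ i := by
    intro i
    have h1 : |(dig r (trem r z i) : ℝ)| ≤ (r:ℝ) := by
      have := abs_dig_le r hr (trem r z i)
      have : |((dig r (trem r z i) : ℤ) : ℝ)| ≤ ((r:ℤ) - 1 : ℤ) := by exact_mod_cast (by exact_mod_cast this : |((dig r (trem r z i) : ℤ) : ℝ)| ≤ (((r:ℤ)-1 : ℤ) : ℝ))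
      push_cast at this
      linarith
    have h2 : (r:ℝ) ^ (-(i + 1 : ℤ)) = ((r:ℝ)⁻¹) ^ i * (r:ℝ)⁻¹ := by
      rw [inv_pow, show -((i:ℤ)+1) = -(i:ℤ) + (-1) by ring, zpow_add₀ hr0, zpow_neg, zpow_neg,
        zpow_one, zpow_natCast]
    rw [hg]
    simp only [norm_mul, Real.norm_eq_abs]
    rw [h2, abs_of_nonneg (by positivity : (0:ℝ) ≤ ((r:ℝ)⁻¹) ^ i * (r:ℝ)⁻¹)]
    calc |(dig r (trem r z i) : ℝ)| * (((r:ℝ)⁻¹) ^ i * (r:ℝ)⁻¹)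
        ≤ (r:ℝ) * (((r:ℝ)⁻¹) ^ i * (r:ℝ)⁻¹) := by
          apply mul_le_mul_of_nonneg_right h1 (by positivity)
      _ = ((r:ℝ)⁻¹) ^ i := by field_simp
  have hsummable : Summable g := by
    apply Summable.of_norm_bounded (summable_geometric_of_lt_one (by positivity) ?_) hbound
    rw [inv_lt_one_iff₀]; right; linarith
  have hS := hsummable.hasSum
  have htend := hS.tendsto_sum_nat
  have htendz : Filter.Tendsto (fun k => ∑ i ∈ Finset.range k, g i) Filter.atTop (nhds z) := by
    have hd : Filter.Tendsto (fun k => (∑ i ∈ Finset.range k, g i) - z) Filter.atTop (nhds 0) := by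
      refine squeeze_zero_norm (a := fun k => ((r:ℝ)⁻¹) ^ k) ?_ ?_
      · intro k
        have := trem_sum r hr z k
        have habs : ‖(∑ i ∈ Finset.range k, g i) - z‖ = |trem r z k| * |(r:ℝ) ^ (-(k:ℤ))| := by
          rw [Real.norm_eq_abs, abs_sub_comm, this, abs_mul]
        rw [habs]
        have h1 : |trem r z k| ≤ 1 := abs_trem_le r hr z hz k
        have h2 : |(r:ℝ) ^ (-(k:ℤ))| = ((r:ℝ)⁻¹) ^ k := by
          rw [abs_of_nonneg (by positivity), ← zpow_natCast ((r:ℝ)⁻¹) k, inv_zpow, ← zpow_neg]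
        rw [h2]
        nlinarith [pow_nonneg (by positivity : (0:ℝ) ≤ (r:ℝ)⁻¹) k]
      · exact tendsto_pow_atTop_nhds_zero_of_lt_one (by positivity)
          (by rw [inv_lt_one_iff₀]; right; linarith)
    have := hd.add_const z
    simpa using this
  have := tendsto_nhds_unique htend htendz
  rwa [this] at hS

lemma nat_digit_sum (r : ℕ) (hr : 2 ≤ r) :
    ∀ D a : ℕ, a < r ^ D → ∑ j ∈ Finset.range D, (a / r ^ j % r) * r ^ j = a := by
  intro D
  induction D with
  | zero => intro a ha; simp at ha; simp [ha]
  | succ D ih =>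
    intro a ha
    rw [Finset.sum_range_succ']
    have h1 : ∀ j, a / r ^ (j+1) % r * r ^ (j+1) = r * ((a / r) / r ^ j % r * r ^ j) := by
      intro j
      rw [pow_succ', ← Nat.div_div_eq_div_mul]
      ring
    simp only [h1, pow_zero, Nat.div_one, mul_one]
    rw [← Finset.mul_sum, ih (a / r) (by
      apply Nat.div_lt_of_lt_mul
      rw [← pow_succ']
      exact ha)]
    exact Nat.div_add_mod a r



/-- Theorem 2 of the paper: for a fixed-point iteration of a
nonexpansive function `f : ℝ → ℝ` (Lipschitz with constant 1) with fixed point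
`xs`, once an iterate comes within `r^(-D)/2` of `xs` there is a choice of
symmetric maximally redundant signed-digit radix-`r` representations of the
iterates whose first `D` digits are stable from that iterate onward. -/
theorem nonexpansive_iteration_digit_stability
    (r D : ℕ) (hr : 2 ≤ r) (hD : 1 ≤ D)
    (f : ℝ → ℝ) (hLip : ∀ a b : ℝ, |f a - f b| ≤ |a - b|)
    (xs : ℝ) (hfix : f xs = xs)
    (hxs : |xs| ≤ 1 - 2 * (r : ℝ) ^ (-(D : ℤ)))
    (x : ℕ → ℝ) (hx : ∀ k : ℕ, x (k + 1) = f (x k))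
    (n : ℕ) (hn : |x n - xs| ≤ (r : ℝ) ^ (-(D : ℤ)) / 2) :
    ∃ d : ℕ → ℕ → ℤ, ∀ k : ℕ, n ≤ k →
      (∀ i, |d k i| ≤ (r : ℤ) - 1) ∧
      HasSum (fun i : ℕ => (d k i : ℝ) * (r : ℝ) ^ (-(i + 1 : ℤ))) (x k) ∧
      (∀ i < D, d k i = d n i) := by
  have hr2 : (2:ℝ) ≤ (r:ℝ) := by exact_mod_cast hr
  have hr0 : (r:ℝ) ≠ 0 := by positivity
  set ε : ℝ := (r:ℝ) ^ (-(D:ℤ)) with hε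
  have hεpos : 0 < ε := by positivity
  set RD : ℝ := (r:ℝ) ^ D with hRD
  have hRDpos : 0 < RD := by positivity
  have hRDε : RD * ε = 1 := by
    rw [hε, hRD, ← zpow_natCast (r:ℝ) D, ← zpow_add₀ hr0]; simp
  set m : ℤ := round (xs * RD) with hm
  have hround : |xs * RD - (m:ℝ)| ≤ 1/2 := abs_sub_round (xs * RD)
  have hxsm : |xs - (m:ℝ) * ε| ≤ ε / 2 := by
    have h1 : xs - (m:ℝ) * ε = (xs * RD - m) * ε := by
      have : xs * (RD * ε) = xs := by rw [hRDε]; ring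
      nlinarith [this]
    rw [h1, abs_mul, abs_of_pos hεpos]
    nlinarith
  -- all iterates from n stay close to xs
  have hiter0 : ∀ j, |x (n + j) - xs| ≤ ε / 2 := by
    intro j
    induction j with
    | zero => simpa using hn
    | succ j ih =>
      have : x (n + (j+1)) = f (x (n + j)) := hx (n + j)
      rw [this]
      calc |f (x (n+j)) - xs| = |f (x (n+j)) - f xs| := by rw [hfix]
        _ ≤ |x (n+j) - xs| := hLip _ _
        _ ≤ ε/2 := ih
  have hiter : ∀ k, n ≤ k → |x k - (m:ℝ) * ε| ≤ ε := by
    intro k hk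
    obtain ⟨j, rfl⟩ := Nat.exists_eq_add_of_le hk
    calc |x (n+j) - (m:ℝ)*ε| ≤ |x (n+j) - xs| + |xs - (m:ℝ)*ε| := abs_sub_le _ _ _
      _ ≤ ε/2 + ε/2 := add_le_add (hiter0 j) hxsm
      _ = ε := by ring
  -- bound on m
  have hmlt : m.natAbs < r ^ D := by
    have h1 : |(m:ℝ)| ≤ |xs * RD| + 1/2 := by
      have := abs_sub_abs_le_abs_sub (m:ℝ) (xs * RD)
      have h2 := abs_sub_comm (xs * RD) (m:ℝ)
      rw [h2] at hround
      linarith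
    have h2 : |xs * RD| ≤ (1 - 2*ε) * RD := by
      rw [abs_mul, abs_of_pos hRDpos]
      have := abs_nonneg xs
      nlinarith
    have h3 : |(m:ℝ)| < RD := by nlinarith
    have h4 : ((m.natAbs : ℕ) : ℝ) < ((r ^ D : ℕ) : ℝ) := by
      rw [Nat.cast_natAbs]
      push_cast
      simpa [hRD] using h3
    exact_mod_cast h4
  set a : ℕ := m.natAbs with ha
  set sgn : ℤ := if m < 0 then -1 else 1 with hsgn
  have hsgnm : sgn * (a : ℤ) = m := by
    rw [hsgn, ha]
    rcases lt_or_ge m 0 with h | h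
    · rw [if_pos h]; omega
    · rw [if_neg (not_lt.mpr h)]; omega
  set c : ℕ → ℤ := fun i => sgn * ((a / r ^ (D - 1 - i)) % r : ℕ) with hc
  have hc_abs : ∀ i, |c i| ≤ (r:ℤ) - 1 := by
    intro i
    rw [hc]
    have h1 : |sgn| = 1 := by
      rw [hsgn]
      rcases lt_or_ge m 0 with h | h
      · rw [if_pos h]; simp
      · rw [if_neg (not_lt.mpr h)]; simp
    rw [abs_mul, h1, one_mul]
    have h2 : (a / r ^ (D - 1 - i)) % r < r := Nat.mod_lt _ (by omega)
    rw [abs_of_nonneg (by positivity)]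
    omega
  -- value of the prefix
  have hpre : ∑ i ∈ Finset.range D, (c i : ℝ) * (r:ℝ) ^ (-(i + 1 : ℤ)) = (m:ℝ) * ε := by
    have hterm : ∀ i ∈ Finset.range D,
        (c i : ℝ) * (r:ℝ) ^ (-(i + 1 : ℤ))
          = (sgn:ℝ) * ε * (((a / r ^ (D-1-i)) % r * r ^ (D-1-i) : ℕ) : ℝ) := by
      intro i hi
      rw [Finset.mem_range] at hi
      have hw : (r:ℝ) ^ (-(i + 1 : ℤ)) = (r:ℝ) ^ ((D-1-i : ℕ)) * ε := by
        rw [hε, ← zpow_natCast (r:ℝ) (D-1-i), ← zpow_add₀ hr0]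
        congr 1
        omega
      rw [hw]
      simp only [hc, Int.cast_mul, Int.cast_natCast, Nat.cast_mul, Nat.cast_pow]
      ring
    rw [Finset.sum_congr rfl hterm, ← Finset.mul_sum]
    have hsum : ∑ i ∈ Finset.range D, (((a / r ^ (D-1-i)) % r * r ^ (D-1-i) : ℕ) : ℝ)
        = (a : ℝ) := by
      rw [← Nat.cast_sum]
      congr 1
      rw [Finset.sum_range_reflect (fun j => a / r ^ j % r * r ^ j) D]
      exact nat_digit_sum r hr D a hmlt
    rw [hsum]
    have : ((sgn * (a:ℤ) : ℤ) : ℝ) = (m:ℝ) := by exact_mod_cast congrArg (Int.cast : ℤ → ℝ) hsgnm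
    push_cast at this
    nlinarith [this]
  -- tail representations
  set z : ℕ → ℝ := fun k => if |x k - (m:ℝ)*ε| ≤ ε then (x k - (m:ℝ)*ε) * RD else 0 with hz
  have hz1 : ∀ k, |z k| ≤ 1 := by
    intro k
    rw [hz]
    dsimp only
    split
    · rename_i h
      rw [abs_mul, abs_of_pos hRDpos]
      nlinarith
    · simp
  set e : ℕ → ℕ → ℤ := fun k => Classical.choose (exists_rep r hr (z k) (hz1 k)) with he
  have hespec : ∀ k, (∀ i, |e k i| ≤ (r:ℤ) - 1) ∧
      HasSum (fun i : ℕ => (e k i : ℝ) * (r:ℝ) ^ (-(i + 1 : ℤ))) (z k) :=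
    fun k => Classical.choose_spec (exists_rep r hr (z k) (hz1 k))
  refine ⟨fun k i => if i < D then c i else e k (i - D), ?_⟩
  intro k hk
  have hxk : |x k - (m:ℝ)*ε| ≤ ε := hiter k hk
  have hzk : z k = (x k - (m:ℝ)*ε) * RD := by rw [hz]; simp [hxk]
  refine ⟨?_, ?_, ?_⟩
  · intro i
    by_cases hi : i < D <;> simp only [hi, if_pos, if_neg, ite_true, ite_false]
    · exact hc_abs i
    · exact (hespec k).1 (i - D)
  · -- the HasSum statement
    have hE := (hespec k).2
    have hE' : HasSum (fun j : ℕ => (e k j : ℝ) * (r:ℝ) ^ (-(j + 1 : ℤ)) * ε) (z k * ε) :=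
      hE.mul_right ε
    have hzε : z k * ε = x k - (m:ℝ)*ε := by
      rw [hzk, mul_assoc, hRDε, mul_one]
    have hinj : Function.Injective (fun j : ℕ => j + D) := fun p q hpq => by
      simpa using hpq
    have hh : HasSum (fun i : ℕ => if i < D then (0:ℝ) else (e k (i - D) : ℝ) * (r:ℝ) ^ (-(i + 1 : ℤ)))
        (x k - (m:ℝ)*ε) := by
      rw [← Function.Injective.hasSum_iff hinj ?side]
      case side =>
        intro i hi
        have : i < D := by
          by_contra h
          exact hi ⟨i - D, by show i - D + D = i; omega⟩
        simp [this]
      have heq : (fun j : ℕ => if j + D < D then (0:ℝ) else (e k (j + D - D) : ℝ) * (r:ℝ) ^ (-((j + D : ℕ) + 1 : ℤ)))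
          = fun j : ℕ => (e k j : ℝ) * (r:ℝ) ^ (-(j + 1 : ℤ)) * ε := by
        funext j
        rw [if_neg (by omega)]
        have h1 : j + D - D = j := by omega
        rw [h1, hε, mul_assoc, ← zpow_add₀ hr0]
        congr 2
        push_cast
        ring
      show HasSum (fun j : ℕ => if j + D < D then (0:ℝ) else (e k (j + D - D) : ℝ) * (r:ℝ) ^ (-((j + D : ℕ) + 1 : ℤ))) _
      rw [heq, ← hzε]
      exact hE'
    have hg : HasSum (fun i : ℕ => if i < D then (c i : ℝ) * (r:ℝ) ^ (-(i + 1 : ℤ)) else 0)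
        ((m:ℝ)*ε) := by
      have h0 : ∀ b ∉ Finset.range D,
          (if b < D then (c b : ℝ) * (r:ℝ) ^ (-(b + 1 : ℤ)) else 0) = 0 := by
        intro b hb
        rw [if_neg (by simpa using hb)]
      have := hasSum_sum_of_ne_finset_zero (L := SummationFilter.unconditional ℕ) h0
      have hval : ∑ b ∈ Finset.range D, (if b < D then (c b : ℝ) * (r:ℝ) ^ (-(b + 1 : ℤ)) else 0)
          = (m:ℝ)*ε := by
        rw [← hpre]
        apply Finset.sum_congr rfl
        intro i hi
        rw [Finset.mem_range] at hi
        rw [if_pos hi]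
      rwa [hval] at this
    have hcomb := hg.add hh
    have hfun : (fun i : ℕ => ((if i < D then c i else e k (i - D) : ℤ) : ℝ) * (r:ℝ) ^ (-(i + 1 : ℤ)))
        = fun i : ℕ => (if i < D then (c i : ℝ) * (r:ℝ) ^ (-(i + 1 : ℤ)) else 0)
            + (if i < D then (0:ℝ) else (e k (i - D) : ℝ) * (r:ℝ) ^ (-(i + 1 : ℤ))) := by
      funext i
      by_cases hi : i < D <;> simp [hi]
    rw [hfun]
    have : (m:ℝ)*ε + (x k - (m:ℝ)*ε) = x k := by ring
    rw [← this]
    exact hcomb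
  · intro i hi
    simp [hi]
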